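/- Let A and B be nonnegative integer sequences in good order with a_i ≤ b_i for all i. If (A;B) is realizable by a simple graph, then the interval pair (S;S) with S = [ã_1,b̃_1],...,[ã_n,b̃_n] is bipartite-interval realizable: there exists a bipartite graph F with parts {x_1,...,x_n}, {y_1,...,y_n} such that ã_i ≤ deg_F(x_i) ≤ b̃_i and ã_i ≤ deg_F(y_i) ≤ b̃_i for all i. -/

import Mathlib

open Finset
open Classical

/-- The pair `(A;B)` is realizable by a simple graph: there is a simple graph `G`
on vertices `v_1, …, v_n` with `a i ≤ deg(v_i) ≤ b i` for `1 ≤ i ≤ n`.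
(Sequences are 1-indexed; vertex `i : Fin n` corresponds to index `i+1`.) -/
def Realizable (n : ℕ) (a b : ℕ → ℕ) : Prop :=
  ∃ (G : SimpleGraph (Fin n)) (_ : DecidableRel G.Adj),
    ∀ i : Fin n, a (i.1 + 1) ≤ G.degree i ∧ G.degree i ≤ b (i.1 + 1)

/-- `A` and `B` are in good order: `(a_{i+1}, b_{i+1}) ⪯ (a_i, b_i)` lexicographically. -/
def GoodOrder (n : ℕ) (a b : ℕ → ℕ) : Prop :=
  ∀ i, 1 ≤ i → i + 1 ≤ n →
    a (i + 1) < a i ∨ (a (i + 1) = a i ∧ b (i + 1) ≤ b i)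

/-- The set `I_t = {i : t+1 ≤ i ≤ n, b i ≥ t+1}`. -/
def Iset (n : ℕ) (b : ℕ → ℕ) (t : ℕ) : Finset ℕ :=
  (Finset.Icc (t + 1) n).filter fun i => t + 1 ≤ b i

/-- The parity correction `ε(t)` of Cai–Deng–Zang. -/
noncomputable def eps (n : ℕ) (a b : ℕ → ℕ) (t : ℕ) : ℤ :=
  if (∀ i ∈ Iset n b t, a i = b i) ∧
      Odd (∑ i ∈ Iset n b t, b i + t * (Iset n b t).card)
  then 1 else 0

/-- `berge n b i` is the `i`-th column sum of the `n × n` 0-1 matrix in which row `k`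
has its `b k` leading entries equal to `1`, skipping the diagonal entry `(k,k)`. -/
def berge (n : ℕ) (b : ℕ → ℕ) (i : ℕ) : ℕ :=
  ((Finset.Icc 1 n).filter fun k => k ≠ i ∧ (i ≤ b k ∨ (i = b k + 1 ∧ k ≤ b k))).card

/-- The conjugate sequence: `conj n b i = |{k : 1 ≤ k ≤ n, b k ≥ i}|`. -/
def conj (n : ℕ) (b : ℕ → ℕ) (i : ℕ) : ℕ :=
  ((Finset.Icc 1 n).filter fun k => i ≤ b k).card

/-- `g = max{i : c_i ≥ i}` (0 if there is no such index). -/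
def gIdx (n : ℕ) (c : ℕ → ℕ) : ℕ :=
  ((Finset.Icc 1 n).filter fun i => i ≤ c i).sup id

/-- The Ryser modification: `c̃_i = c_i + 1` for `i ≤ g`, and `c̃_i = c_i` otherwise. -/
def tilde (n : ℕ) (c : ℕ → ℕ) (i : ℕ) : ℕ :=
  if i ≤ gIdx n c then c i + 1 else c i

/-- `s = max{i : a_i ≥ i - 1}` (0 if there is no such index). -/
def sIdx (n : ℕ) (a : ℕ → ℕ) : ℕ :=
  ((Finset.Icc 1 n).filter fun i => i ≤ a i + 1).sup id

/-- The interval pair `(S;S)` is bipartite-interval realizable: there is a bipartite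
graph `F` with parts `{x_1,…,x_n}`, `{y_1,…,y_n}` (modelled on `Fin n ⊕ Fin n`, all
edges going between the parts) with `lo i ≤ deg(x_i) ≤ hi i` and `lo i ≤ deg(y_i) ≤ hi i`. -/
def BipIntervalRealizable (n : ℕ) (lo hi : ℕ → ℕ) : Prop :=
  ∃ (F : SimpleGraph (Fin n ⊕ Fin n)) (_ : DecidableRel F.Adj),
    (∀ u v, F.Adj u v → u.isLeft ≠ v.isLeft) ∧
    (∀ i : Fin n, lo (i.1 + 1) ≤ F.degree (Sum.inl i) ∧ F.degree (Sum.inl i) ≤ hi (i.1 + 1)) ∧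
    (∀ i : Fin n, lo (i.1 + 1) ≤ F.degree (Sum.inr i) ∧ F.degree (Sum.inr i) ≤ hi (i.1 + 1))

/-- Theorem 2.3: if `(A;B)` (in good order, with `a_i ≤ b_i`) is realizable, then the
interval pair `(S;S)` with `S = [ã_1,b̃_1],…,[ã_n,b̃_n]` is bipartite-interval realizable. -/
theorem realizable_imp_bipartite_interval (n : ℕ) (a b : ℕ → ℕ)
    (hgood : GoodOrder n a b) (hab : ∀ i, 1 ≤ i → i ≤ n → a i ≤ b i)
    (hreal : Realizable n a b) :
    BipIntervalRealizable n (tilde n a) (tilde n b) := by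
  classical
  obtain ⟨G, _, hG⟩ := hreal
  have hgab : gIdx n a ≤ gIdx n b := by
    apply Finset.sup_mono
    intro i hi
    simp only [Finset.mem_filter, Finset.mem_Icc] at hi ⊢
    exact ⟨hi.1, hi.2.trans (hab i hi.1.1 hi.1.2)⟩
  set g := gIdx n b with hg
  let F : SimpleGraph (Fin n ⊕ Fin n) :=
    { Adj := fun u v => match u, v with
        | Sum.inl i, Sum.inr j => G.Adj i j ∨ (i = j ∧ i.1 + 1 ≤ g)
        | Sum.inr i, Sum.inl j => G.Adj j i ∨ (j = i ∧ j.1 + 1 ≤ g)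
        | _, _ => False
      symm := by
        constructor; rintro (i|i) (j|j) h <;> simp_all
      loopless := by
        constructor; rintro (i|i) h <;> simp_all }
  have hAdj : ∀ i j : Fin n, F.Adj (Sum.inl i) (Sum.inr j) ↔
      (G.Adj i j ∨ (i = j ∧ i.1 + 1 ≤ g)) := by
    intro i j; rfl
  have hAdj' : ∀ i j : Fin n, F.Adj (Sum.inr i) (Sum.inl j) ↔
      (G.Adj j i ∨ (j = i ∧ j.1 + 1 ≤ g)) := by
    intro i j; rfl
  have hNl : ∀ i : Fin n, F.neighborFinset (Sum.inl i) =
      (if i.1 + 1 ≤ g then insert i (G.neighborFinset i) else G.neighborFinset i).image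
        Sum.inr := by
    intro i
    ext u
    rcases u with j | j
    · simp only [SimpleGraph.mem_neighborFinset, Finset.mem_image]
      constructor
      · intro h; exact absurd h (by rintro h; exact h.elim)
      · rintro ⟨x, _, hx⟩; exact absurd hx (by simp)
    · simp only [SimpleGraph.mem_neighborFinset, hAdj, Finset.mem_image]
      by_cases hc : i.1 + 1 ≤ g
      · simp only [if_pos hc, Finset.mem_insert, SimpleGraph.mem_neighborFinset]
        constructor
        · rintro (h | ⟨rfl, _⟩)
          · exact ⟨j, Or.inr h, rfl⟩
          · exact ⟨i, Or.inl rfl, rfl⟩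
        · rintro ⟨x, hx, hxe⟩
          cases Sum.inr_injective hxe
          rcases hx with rfl | h
          · exact Or.inr ⟨rfl, hc⟩
          · exact Or.inl h
      · simp only [if_neg hc, SimpleGraph.mem_neighborFinset]
        constructor
        · rintro (h | ⟨rfl, hc'⟩)
          · exact ⟨j, h, rfl⟩
          · exact absurd hc' hc
        · rintro ⟨x, hx, hxe⟩
          cases Sum.inr_injective hxe
          exact Or.inl hx
  have hNr : ∀ i : Fin n, F.neighborFinset (Sum.inr i) =
      (if i.1 + 1 ≤ g then insert i (G.neighborFinset i) else G.neighborFinset i).image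
        Sum.inl := by
    intro i
    ext u
    rcases u with j | j
    · simp only [SimpleGraph.mem_neighborFinset, hAdj', Finset.mem_image]
      by_cases hc : i.1 + 1 ≤ g
      · simp only [if_pos hc, Finset.mem_insert, SimpleGraph.mem_neighborFinset]
        constructor
        · rintro (h | ⟨rfl, _⟩)
          · exact ⟨j, Or.inr (G.adj_symm h), rfl⟩
          · exact ⟨j, Or.inl rfl, rfl⟩
        · rintro ⟨x, hx, hxe⟩
          cases Sum.inl_injective hxe
          rcases hx with rfl | h
          · exact Or.inr ⟨rfl, hc⟩
          · exact Or.inl (G.adj_symm h)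
      · simp only [if_neg hc, SimpleGraph.mem_neighborFinset]
        constructor
        · rintro (h | ⟨rfl, hc'⟩)
          · exact ⟨j, G.adj_symm h, rfl⟩
          · exact absurd hc' hc
        · rintro ⟨x, hx, hxe⟩
          cases Sum.inl_injective hxe
          exact Or.inl (G.adj_symm hx)
    · simp only [SimpleGraph.mem_neighborFinset, Finset.mem_image]
      constructor
      · intro h; exact absurd h (by rintro h; exact h.elim)
      · rintro ⟨x, _, hx⟩; exact absurd hx (by simp)
  have hcard : ∀ i : Fin n,
      (if i.1 + 1 ≤ g then insert i (G.neighborFinset i) else G.neighborFinset i).card =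
        G.degree i + (if i.1 + 1 ≤ g then 1 else 0) := by
    intro i
    by_cases hc : i.1 + 1 ≤ g
    · rw [if_pos hc, if_pos hc,
        Finset.card_insert_of_notMem (by simp [SimpleGraph.mem_neighborFinset])]
      rfl
    · rw [if_neg hc, if_neg hc]; rfl
  have hdegl : ∀ i : Fin n, F.degree (Sum.inl i) =
      G.degree i + (if i.1 + 1 ≤ g then 1 else 0) := by
    intro i
    rw [← SimpleGraph.card_neighborFinset_eq_degree, hNl i,
      Finset.card_image_of_injective _ Sum.inr_injective, hcard i]
  have hdegr : ∀ i : Fin n, F.degree (Sum.inr i) =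
      G.degree i + (if i.1 + 1 ≤ g then 1 else 0) := by
    intro i
    rw [← SimpleGraph.card_neighborFinset_eq_degree, hNr i,
      Finset.card_image_of_injective _ Sum.inl_injective, hcard i]
  have hbound : ∀ i : Fin n,
      tilde n a (i.1 + 1) ≤ G.degree i + (if i.1 + 1 ≤ g then 1 else 0) ∧
      G.degree i + (if i.1 + 1 ≤ g then 1 else 0) ≤ tilde n b (i.1 + 1) := by
    intro i
    obtain ⟨h1, h2⟩ := hG i
    by_cases hc : i.1 + 1 ≤ g
    · rw [if_pos hc]
      constructor
      · unfold tilde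
        split
        · omega
        · omega
      · unfold tilde
        rw [if_pos hc]
        omega
    · rw [if_neg hc]
      have hca : ¬ (i.1 + 1 ≤ gIdx n a) := fun h => hc (h.trans hgab)
      constructor
      · unfold tilde; rw [if_neg hca]; exact h1
      · unfold tilde; rw [if_neg hc]; exact h2
  refine ⟨F, Classical.decRel _, ?_, ?_, ?_⟩
  · rintro (i|i) (j|j) h <;> simp_all <;> exact h.elim
  · intro i; rw [hdegl i]; exact hbound i
  · intro i; rw [hdegr i]; exact hbound i
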